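/- Let X be a finite connected graph of genus g and let G be a finite group acting on X, possibly with invertible edges. Let g(X'/G) = 1 − (#(G-orbits on V(X)) + #(G-orbits on E(X))) + #(G-orbits on D(X)) be the genus of the quotient of the barycentric subdivision X' of X by G (whose black vertices are the V-orbits, white vertices are the E-orbits, and edges are the dart orbits). Then g − 1 = |G|·(g(X'/G) − 1) + Σ_{v ∈ V(X)} (|G^v| − 1) − Σ_{e ∈ E(X)} (|G^e| − 1) + Σ_{e ∈ E(X)} (|G^{e}| − |G^e|). -/

import Mathlib

open MulAction Finset


lemma aux_orbstab {G α : Type} [Group G] [Fintype G] [MulAction G α] (a : α) :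
    Nat.card (MulAction.orbit G a) * Nat.card (MulAction.stabilizer G a) = Nat.card G := by
  classical
  haveI : Fintype (MulAction.orbit G a) := Set.fintypeRange _
  simp only [Nat.card_eq_fintype_card]
  exact MulAction.card_orbit_mul_card_stabilizer_eq_card_group G a

lemma aux_stab_card_eq {G α : Type} [Group G] [Fintype G] [MulAction G α] {a b : α}
    (h : MulAction.orbit G a = MulAction.orbit G b) :
    Nat.card (MulAction.stabilizer G a) = Nat.card (MulAction.stabilizer G b) := by
  classical
  have ha := aux_orbstab (G := G) a
  have hb := aux_orbstab (G := G) b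
  rw [h] at ha
  haveI : Fintype (MulAction.orbit G b) := Set.fintypeRange _
  haveI : Nonempty (MulAction.orbit G b) := ⟨⟨b, MulAction.mem_orbit_self b⟩⟩
  have hpos : 0 < Nat.card (MulAction.orbit G b) :=
    Nat.card_pos (α := MulAction.orbit G b)
  exact Nat.eq_of_mul_eq_mul_left hpos (by rw [ha, hb])

lemma sum_card_stabilizer {G α : Type} [Group G] [Fintype G] [MulAction G α]
    [Fintype α] (s : Finset α) (hs : ∀ (g : G) (a : α), a ∈ s → g • a ∈ s) :
    ∑ a ∈ s, Nat.card (MulAction.stabilizer G a)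
      = Nat.card G * Nat.card {t : Set α | ∃ a ∈ s, t = MulAction.orbit G a} := by
  classical
  have himg : {t : Set α | ∃ a ∈ s, t = MulAction.orbit G a}
      = ↑(s.image (fun a => MulAction.orbit G a)) := by
    ext t
    simp only [Set.mem_setOf_eq, coe_image, Set.mem_image, mem_coe]
    constructor
    · rintro ⟨a, ha, rfl⟩; exact ⟨a, ha, rfl⟩
    · rintro ⟨a, ha, rfl⟩; exact ⟨a, ha, rfl⟩
  rw [himg]; simp only [Finset.coe_sort_coe, Nat.card_eq_finsetCard]
  rw [← Finset.sum_fiberwise_of_maps_to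
    (fun a ha => Finset.mem_image_of_mem (fun a => MulAction.orbit G a) ha)
    (fun a => Nat.card (MulAction.stabilizer G a))]
  rw [Finset.sum_congr rfl (fun t ht => ?_), Finset.sum_const, smul_eq_mul, mul_comm]
  obtain ⟨a₀, ha₀, rfl⟩ := Finset.mem_image.mp ht
  haveI : Fintype (MulAction.orbit G a₀) := Set.fintypeRange _
  have hfil : s.filter (fun a => MulAction.orbit G a = MulAction.orbit G a₀)
      = (MulAction.orbit G a₀).toFinset := by
    ext a
    simp only [mem_filter, Set.mem_toFinset]
    constructor
    · rintro ⟨-, h⟩; exact MulAction.orbit_eq_iff.mp h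
    · intro h
      refine ⟨?_, MulAction.orbit_eq_iff.mpr h⟩
      obtain ⟨g, rfl⟩ := h
      exact hs g a₀ ha₀
  rw [hfil]
  have : ∀ a ∈ (MulAction.orbit G a₀).toFinset,
      Nat.card (MulAction.stabilizer G a) = Nat.card (MulAction.stabilizer G a₀) := by
    intro a ha
    exact aux_stab_card_eq (MulAction.orbit_eq_iff.mpr (Set.mem_toFinset.mp ha))
  rw [Finset.sum_congr rfl this, Finset.sum_const, smul_eq_mul, Set.toFinset_card,
    ← Nat.card_eq_fintype_card]
  exact aux_orbstab a₀

/-- The natural action of `G` on unordered pairs. -/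
instance sym2MulAction {G α : Type} [Group G] [MulAction G α] : MulAction G (Sym2 α) where
  smul g e := Sym2.map (fun y => g • y) e
  one_smul e := by
    induction e using Sym2.ind with
    | _ x y => show Sym2.map _ _ = _; simp
  mul_smul g h e := by
    induction e using Sym2.ind with
    | _ x y =>
      show Sym2.map _ _ = Sym2.map _ (Sym2.map _ _)
      simp [mul_smul]

lemma sym2_smul_def {G α : Type} [Group G] [MulAction G α] (g : G) (e : Sym2 α) :
    g • e = Sym2.map (fun y => g • y) e := rfl


/-- A finite graph `X = (D, V; I, bar)`: `D` the darts, `V` the vertices,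
`I` the incidence function, `bar` the fixed-point-free dart-reversing involution.
A finite group `G` acts on `X` via automorphisms (equivariantly and faithfully).
The edge set `E` consists of the unordered pairs `{x, bar x}`. -/
theorem riemann_hurwitz_barycentric
    {V D G : Type} [Fintype V] [Fintype D] [Nonempty V]
    [Group G] [Fintype G] [MulAction G D] [MulAction G V]
    (I : D → V) (bar : D → D)
    (hbar_invol : ∀ x : D, bar (bar x) = x)
    (hbar_nofix : ∀ x : D, bar x ≠ x)
    (hI_equiv : ∀ (g : G) (x : D), I (g • x) = g • I x)
    (hbar_equiv : ∀ (g : G) (x : D), bar (g • x) = g • bar x)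
    (hfaithful : ∀ g : G, (∀ x : D, g • x = x) → (∀ v : V, g • v = v) → g = 1)
    (E : Set (Sym2 D)) (hE : E = {e : Sym2 D | ∃ x : D, e = Sym2.mk x (bar x)})
    (hconn : ∀ u v : V, Relation.ReflTransGen
      (fun a b : V => ∃ x : D, I x = a ∧ I (bar x) = b) u v)
    (g gQ : ℤ)
    (hg : g = 1 - (Nat.card V : ℤ) + (Nat.card E : ℤ))
    (hgQ : gQ = 1 - ((Nat.card {s : Set V | ∃ v : V, s = MulAction.orbit G v} : ℤ) + (Nat.card {s : Set (Sym2 D) | ∃ e ∈ E, s = {e' : Sym2 D | ∃ g : G, Sym2.map (fun y => g • y) e = e'}} : ℤ)) + (Nat.card {s : Set D | ∃ x : D, s = MulAction.orbit G x} : ℤ)) :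
    g - 1 = (Nat.card G : ℤ) * (gQ - 1)
      + (∑ᶠ v : V, ((Nat.card (MulAction.stabilizer G v) : ℤ) - 1))
      - (∑ᶠ e ∈ E, ((Nat.card {g : G | ∀ y ∈ e, g • y = y} : ℤ) - 1))
      + (∑ᶠ e ∈ E, ((Nat.card {g : G | Sym2.map (fun y => g • y) e = e} : ℤ)
          - (Nat.card {g : G | ∀ y ∈ e, g • y = y} : ℤ))) := by
  classical
  have hbar_inj : Function.Injective bar := Function.LeftInverse.injective hbar_invol
  have hstab_bar : ∀ x : D, MulAction.stabilizer G (bar x) = MulAction.stabilizer G x := by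
    intro x; ext gg
    simp only [MulAction.mem_stabilizer_iff, ← hbar_equiv gg x, hbar_inj.eq_iff]
  -- the edge finset
  set F : Finset (Sym2 D) := (Set.toFinite E).toFinset with hFdef
  have hF : (↑F : Set (Sym2 D)) = E := Set.Finite.coe_toFinset _
  have hmemF : ∀ e : Sym2 D, e ∈ F ↔ e ∈ E := by
    intro e; rw [← hF]; exact Iff.rfl
  -- counting for V
  have hV := sum_card_stabilizer (G := G) (α := V) Finset.univ
    (fun g a _ => Finset.mem_univ _)
  rw [show {t : Set V | ∃ a ∈ (Finset.univ : Finset V), t = MulAction.orbit G a}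
      = {s : Set V | ∃ v : V, s = MulAction.orbit G v} by
    ext t; simp] at hV
  -- counting for D
  have hD := sum_card_stabilizer (G := G) (α := D) Finset.univ
    (fun g a _ => Finset.mem_univ _)
  rw [show {t : Set D | ∃ a ∈ (Finset.univ : Finset D), t = MulAction.orbit G a}
      = {s : Set D | ∃ x : D, s = MulAction.orbit G x} by
    ext t; simp] at hD
  -- E is invariant
  have hEinv : ∀ (gg : G) (e : Sym2 D), e ∈ F → gg • e ∈ F := by
    intro gg e he
    rw [hmemF] at he ⊢
    rw [hE] at he ⊢
    obtain ⟨x, rfl⟩ := he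
    refine ⟨gg • x, ?_⟩
    rw [sym2_smul_def]
    simp only [Sym2.map_pair_eq, hbar_equiv]
  -- counting for E (setwise stabilizers)
  have hEset := sum_card_stabilizer (G := G) (α := Sym2 D) F hEinv
  rw [show {t : Set (Sym2 D) | ∃ a ∈ F, t = MulAction.orbit G a}
      = {s : Set (Sym2 D) | ∃ e ∈ E, s = {e' : Sym2 D | ∃ g : G, Sym2.map (fun y => g • y) e = e'}} by
    ext t
    simp only [Set.mem_setOf_eq, hmemF]
    refine exists_congr fun e => and_congr_right fun _ => ?_
    have : MulAction.orbit G e = {e' : Sym2 D | ∃ g : G, Sym2.map (fun y => g • y) e = e'} := by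
      ext e'
      simp only [Set.mem_setOf_eq, MulAction.mem_orbit_iff, sym2_smul_def]
    rw [this]] at hEset
  -- setwise stabilizer cardinality
  have hsetw : ∀ e : Sym2 D,
      Nat.card {g : G | Sym2.map (fun y => g • y) e = e} = Nat.card (MulAction.stabilizer G e) :=
    fun e => Nat.card_congr (Equiv.subtypeEquivRight fun gg => by
      simp only [Set.mem_setOf_eq, MulAction.mem_stabilizer_iff, sym2_smul_def])
  -- pointwise stabilizer cardinality
  have hpt : ∀ x : D,
      Nat.card {g : G | ∀ y ∈ Sym2.mk x (bar x), g • y = y}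
        = Nat.card (MulAction.stabilizer G x) :=
    fun x => Nat.card_congr (Equiv.subtypeEquivRight fun gg => by
      simp only [Set.mem_setOf_eq, Sym2.mem_iff, MulAction.mem_stabilizer_iff]
      constructor
      · intro h; exact h x (Or.inl rfl)
      · rintro h y (rfl | rfl)
        · exact h
        · rw [← hbar_equiv, h])
  -- sum over darts equals twice pointwise sums over edges
  have hdart : ∑ x : D, Nat.card (MulAction.stabilizer G x)
      = ∑ e ∈ F, 2 * Nat.card {g : G | ∀ y ∈ e, g • y = y} := by
    rw [← Finset.sum_fiberwise_of_maps_to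
      (fun x (_ : x ∈ Finset.univ) => (hmemF _).mpr (by rw [hE]; exact ⟨x, rfl⟩))
      (fun x => Nat.card (MulAction.stabilizer G x))]
    refine Finset.sum_congr rfl fun e he => ?_
    obtain ⟨x₀, rfl⟩ : ∃ x₀ : D, e = Sym2.mk x₀ (bar x₀) := by
      rw [hmemF, hE] at he; exact he
    have hfil : Finset.univ.filter (fun y => Sym2.mk y (bar y) = Sym2.mk x₀ (bar x₀))
        = {x₀, bar x₀} := by
      ext y
      simp only [Finset.mem_filter, Finset.mem_univ, true_and, Finset.mem_insert,
        Finset.mem_singleton, Sym2.eq_iff]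
      constructor
      · rintro (⟨h, -⟩ | ⟨h, -⟩)
        · exact Or.inl h
        · exact Or.inr h
      · rintro (rfl | rfl)
        · exact Or.inl ⟨rfl, rfl⟩
        · exact Or.inr ⟨rfl, hbar_invol x₀⟩
    rw [hfil, Finset.sum_pair (Ne.symm (hbar_nofix x₀)), hstab_bar, hpt, two_mul]
  -- convert finsums to finset sums
  rw [finsum_eq_sum_of_fintype]
  rw [show (∑ᶠ e ∈ E, ((Nat.card {g : G | ∀ y ∈ e, g • y = y} : ℤ) - 1))
      = ∑ e ∈ F, ((Nat.card {g : G | ∀ y ∈ e, g • y = y} : ℤ) - 1) by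
    rw [← hF, finsum_mem_coe_finset]]
  rw [show (∑ᶠ e ∈ E, ((Nat.card {g : G | Sym2.map (fun y => g • y) e = e} : ℤ)
          - (Nat.card {g : G | ∀ y ∈ e, g • y = y} : ℤ)))
      = ∑ e ∈ F, ((Nat.card {g : G | Sym2.map (fun y => g • y) e = e} : ℤ)
          - (Nat.card {g : G | ∀ y ∈ e, g • y = y} : ℤ)) by
    rw [← hF, finsum_mem_coe_finset]]
  -- cardinalities
  have hcardV : (Nat.card V : ℤ) = (Finset.univ : Finset V).card := by
    rw [Nat.card_eq_fintype_card, Finset.card_univ]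
  have hcardE : (Nat.card E : ℤ) = F.card := by
    rw [Nat.card_eq_card_finite_toFinset (Set.toFinite E)]
  -- integer versions of the counting identities
  have hVZ : ∑ v : V, (Nat.card (MulAction.stabilizer G v) : ℤ)
      = (Nat.card G : ℤ) * (Nat.card {s : Set V | ∃ v : V, s = MulAction.orbit G v} : ℤ) := by
    exact_mod_cast congrArg (Nat.cast : ℕ → ℤ) hV
  have hDZ : ∑ x : D, (Nat.card (MulAction.stabilizer G x) : ℤ)
      = (Nat.card G : ℤ) * (Nat.card {s : Set D | ∃ x : D, s = MulAction.orbit G x} : ℤ) := by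
    exact_mod_cast congrArg (Nat.cast : ℕ → ℤ) hD
  have hEsetZ : ∑ e ∈ F, (Nat.card (MulAction.stabilizer G e) : ℤ)
      = (Nat.card G : ℤ) * (Nat.card {s : Set (Sym2 D) | ∃ e ∈ E, s = {e' : Sym2 D | ∃ g : G, Sym2.map (fun y => g • y) e = e'}} : ℤ) := by
    exact_mod_cast congrArg (Nat.cast : ℕ → ℤ) hEset
  have hdartZ : ∑ x : D, (Nat.card (MulAction.stabilizer G x) : ℤ)
      = ∑ e ∈ F, 2 * (Nat.card {g : G | ∀ y ∈ e, g • y = y} : ℤ) := by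
    exact_mod_cast congrArg (Nat.cast : ℕ → ℤ) hdart
  -- split the sums
  simp only [Finset.sum_sub_distrib, Finset.sum_const, nsmul_eq_mul, mul_one] at *
  -- replace setwise-stabilizer sum
  have hsetwsum : ∑ e ∈ F, (Nat.card {g : G | Sym2.map (fun y => g • y) e = e} : ℤ)
      = ∑ e ∈ F, (Nat.card (MulAction.stabilizer G e) : ℤ) := by
    refine Finset.sum_congr rfl fun e _ => ?_
    rw [hsetw e]
  have h2 : ∑ e ∈ F, 2 * (Nat.card {g : G | ∀ y ∈ e, g • y = y} : ℤ)
      = 2 * ∑ e ∈ F, (Nat.card {g : G | ∀ y ∈ e, g • y = y} : ℤ) := by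
    rw [Finset.mul_sum]
  rw [hsetwsum, hg, hgQ, hcardV, hcardE]
  rw [h2] at hdartZ
  push_cast at *
  linarith [hVZ, hDZ, hEsetZ, hdartZ]
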